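/- For any matching π of size n, the sum over p of m_p(π) is at most d(π), the number of boxes of the Young diagram Y(π), and d(π) minus this sum is an even integer. -/

import Mathlib

/-- A noncrossing perfect matching of `{1,…,2n}`, given as a finset of pairs `(a,b)`
with `a < b`. -/
def IsMatching (n : ℕ) (M : Finset (ℕ × ℕ)) : Prop :=
  (∀ q ∈ M, 1 ≤ q.1 ∧ q.1 < q.2 ∧ q.2 ≤ 2 * n) ∧
  (∀ x, 1 ≤ x → x ≤ 2 * n → ∃! q, q ∈ M ∧ (q.1 = x ∨ q.2 = x)) ∧
  (∀ q ∈ M, ∀ r ∈ M, ¬(q.1 < r.1 ∧ r.1 < q.2 ∧ q.2 < r.2))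

/-- Rule A multiplicity: half the number of arches separating `{1,…,p} ∪ {2n+1-p,…,2n}`
from the middle part. -/
def mA (n : ℕ) (M : Finset (ℕ × ℕ)) (p : ℕ) : ℕ :=
  ((M.filter fun q => q.1 ≤ p ∧ p < q.2 ∧ q.2 < 2 * n + 1 - p).card +
   (M.filter fun q => p < q.1 ∧ q.1 < 2 * n + 1 - p ∧ 2 * n + 1 - p ≤ q.2).card) / 2

/-- The Young diagram `Y(π)` of the matching `M`, with 1-indexed boxes `(x,y)`:
`(x,y) ∈ Y(π)` iff the number of left endpoints of arches among `{1,…,n-x+y}` is at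
most `n - x`. -/
def cellsM (n : ℕ) (M : Finset (ℕ × ℕ)) : Finset (ℕ × ℕ) :=
  ((Finset.Icc 1 n) ×ˢ (Finset.Icc 1 n)).filter fun u =>
    ((M.image Prod.fst).filter fun t => t ≤ n - u.1 + u.2).card ≤ n - u.1

/-- The diagonal depth of a box: the number of `t` with `(x+t, y+t)` a box of `Y(π)`.
The successive rims of `Y(π)` are the sets of boxes of fixed depth. -/
def depthM (n : ℕ) (M : Finset (ℕ × ℕ)) (u : ℕ × ℕ) : ℕ :=
  ((Finset.range (n + 1)).filter fun t => (u.1 + t, u.2 + t) ∈ cellsM n M).card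

/-- The `ℓ`-th rim of `Y(π)`. -/
def rimM (n : ℕ) (M : Finset (ℕ × ℕ)) (ℓ : ℕ) : Finset (ℕ × ℕ) :=
  (cellsM n M).filter fun u => depthM n M u = ℓ

/-- Label (`n+1-x-y`) of the bottom-left box of the `ℓ`-th rim. -/
def iLab (n : ℕ) (M : Finset (ℕ × ℕ)) (ℓ : ℕ) : ℕ :=
  ((rimM n M ℓ).filter fun u => u.1 = (rimM n M ℓ).sup Prod.fst).sup
    fun u => n + 1 - u.1 - u.2

/-- Label (`n+1-x-y`) of the top-right box of the `ℓ`-th rim. -/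
def jLab (n : ℕ) (M : Finset (ℕ × ℕ)) (ℓ : ℕ) : ℕ :=
  ((rimM n M ℓ).filter fun u => u.2 = (rimM n M ℓ).sup Prod.snd).sup
    fun u => n + 1 - u.1 - u.2

/-- Minimal label on the `ℓ`-th rim (equals `n + 1` by convention on an empty rim,
which then contributes nothing below). -/
def kLab (n : ℕ) (M : Finset (ℕ × ℕ)) (ℓ : ℕ) : ℕ :=
  n + 1 - (rimM n M ℓ).sup fun u => u.1 + u.2

/-- Rule B multiplicity: multiplicity of `p` in the union over the rims of the
multisets `{k} ∪ {i,…,k+1} ∪ {j,…,k+1}`. -/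
def mB (n : ℕ) (M : Finset (ℕ × ℕ)) (p : ℕ) : ℕ :=
  ∑ ℓ ∈ Finset.Icc 1 n,
    ((if kLab n M ℓ ≤ p ∧ p ≤ iLab n M ℓ then 1 else 0) +
     (if kLab n M ℓ + 1 ≤ p ∧ p ≤ jLab n M ℓ then 1 else 0))

open Finset

noncomputable section
namespace RuleB
variable (n : ℕ) (M : Finset (ℕ × ℕ))

def lcnt (m : ℕ) : ℕ := ((M.image Prod.fst).filter fun t => t ≤ m).card

lemma lcnt_mono {m m' : ℕ} (h : m ≤ m') : lcnt M m ≤ lcnt M m' := by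
  apply card_le_card
  intro t ht
  rw [mem_filter] at *
  exact ⟨ht.1, ht.2.trans h⟩

lemma lcnt_add_le (m d : ℕ) : lcnt M (m + d) ≤ lcnt M m + d := by
  have h1 : (M.image Prod.fst).filter (fun t => t ≤ m + d) ⊆
      ((M.image Prod.fst).filter fun t => t ≤ m) ∪
      ((M.image Prod.fst).filter fun t => m < t ∧ t ≤ m + d) := by
    intro t ht
    rw [mem_filter] at ht
    rw [mem_union, mem_filter, mem_filter]
    rcases le_or_gt t m with h | h
    · exact Or.inl ⟨ht.1, h⟩
    · exact Or.inr ⟨ht.1, h, ht.2⟩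
  have h2 : ((M.image Prod.fst).filter fun t => m < t ∧ t ≤ m + d) ⊆ Ioc m (m + d) := by
    intro t ht
    rw [mem_filter] at ht
    rw [mem_Ioc]
    exact ht.2
  calc lcnt M (m + d) ≤ _ := card_le_card h1
    _ ≤ _ + _ := card_union_le _ _
    _ ≤ lcnt M m + d := by
        have := card_le_card h2
        simp only [Nat.card_Ioc] at this
        simp only [lcnt]
        omega

lemma fst_injOn (hM : IsMatching n M) :
    ∀ q ∈ M, ∀ r ∈ M, q.1 = r.1 → q = r := by
  intro q hq r hr hqr
  obtain ⟨hq1, hq2, hq3⟩ := hM.1 q hq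
  obtain ⟨u, _, huniq⟩ := hM.2.1 q.1 hq1 (by omega)
  have e1 : q = u := huniq q ⟨hq, Or.inl rfl⟩
  have e2 : r = u := huniq r ⟨hr, Or.inl hqr.symm⟩
  rw [e1, e2]

lemma prefix_bound (hM : IsMatching n M) (m : ℕ) (hm : m ≤ 2 * n) :
    m ≤ 2 * lcnt M m := by
  classical
  have hsub : Icc 1 m ⊆ ((M.filter fun q => q.1 ≤ m).image Prod.fst) ∪
      ((M.filter fun q => q.2 ≤ m).image Prod.snd) := by
    intro x hx
    rw [mem_Icc] at hx
    obtain ⟨q, ⟨hqM, hqx⟩, _⟩ := hM.2.1 x hx.1 (by omega)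
    rcases hqx with h | h
    · apply mem_union_left
      exact mem_image.2 ⟨q, mem_filter.2 ⟨hqM, by omega⟩, h⟩
    · apply mem_union_right
      exact mem_image.2 ⟨q, mem_filter.2 ⟨hqM, by omega⟩, h⟩
  have hRL : (M.filter fun q => q.2 ≤ m) ⊆ (M.filter fun q => q.1 ≤ m) := by
    intro q hq
    rw [mem_filter] at *
    have := hM.1 q hq.1
    exact ⟨hq.1, by omega⟩
  have hcard : m ≤ ((M.filter fun q => q.1 ≤ m).image Prod.fst).card +
      ((M.filter fun q => q.2 ≤ m).image Prod.snd).card := by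
    calc m = (Icc 1 m).card := by simp
      _ ≤ _ := card_le_card hsub
      _ ≤ _ := card_union_le _ _
  have h1 : ((M.filter fun q => q.1 ≤ m).image Prod.fst).card ≤ lcnt M m := by
    apply card_le_card
    intro t ht
    simp only [mem_image, mem_filter] at *
    obtain ⟨q, ⟨hq, hq2⟩, rfl⟩ := ht
    exact ⟨⟨q, hq, rfl⟩, hq2⟩
  have h2 : ((M.filter fun q => q.2 ≤ m).image Prod.snd).card ≤ lcnt M m := by
    calc ((M.filter fun q => q.2 ≤ m).image Prod.snd).card
        ≤ (M.filter fun q => q.2 ≤ m).card := card_image_le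
      _ ≤ (M.filter fun q => q.1 ≤ m).card := card_le_card hRL
      _ = ((M.filter fun q => q.1 ≤ m).image Prod.fst).card := by
          rw [card_image_of_injOn]
          intro q hq r hr h
          simp only [mem_coe, mem_filter] at hq hr
          exact fst_injOn n M hM q hq.1 r hr.1 h
      _ ≤ lcnt M m := h1
  omega

lemma mem_cells_iff (u : ℕ × ℕ) :
    u ∈ cellsM n M ↔ 1 ≤ u.1 ∧ u.1 ≤ n ∧ 1 ≤ u.2 ∧ u.2 ≤ n ∧
      lcnt M (n - u.1 + u.2) ≤ n - u.1 := by
  simp only [cellsM, mem_filter, mem_product, mem_Icc, lcnt]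
  tauto

lemma cells_downclosed {x y x' y' : ℕ} (h : (x, y) ∈ cellsM n M)
    (hx1 : 1 ≤ x') (hx : x' ≤ x) (hy1 : 1 ≤ y') (hy : y' ≤ y) :
    (x', y') ∈ cellsM n M := by
  rw [mem_cells_iff] at *
  simp only at *
  obtain ⟨h1, h2, h3, h4, h5⟩ := h
  refine ⟨hx1, by omega, hy1, by omega, ?_⟩
  have e1 : lcnt M (n - x' + y') ≤ lcnt M ((n - x + y) + (x - x')) :=
    lcnt_mono M (by omega)
  have e3 : lcnt M ((n - x + y) + (x - x')) ≤ lcnt M (n - x + y) + (x - x') :=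
    lcnt_add_le M _ _
  omega

lemma cells_sum_le (hM : IsMatching n M) {x y : ℕ} (h : (x, y) ∈ cellsM n M) :
    x + y ≤ n := by
  rw [mem_cells_iff] at h
  simp only at h
  obtain ⟨h1, h2, h3, h4, h5⟩ := h
  have := prefix_bound n M hM (n - x + y) (by omega)
  omega


def lam (x : ℕ) : ℕ := ((Finset.Icc 1 n).filter fun y => (x, y) ∈ cellsM n M).sup id

lemma le_lam {x y : ℕ} (h : (x, y) ∈ cellsM n M) : y ≤ lam n M x := by
  apply le_sup (f := id)
  rw [mem_filter, mem_Icc]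
  have := (mem_cells_iff n M (x, y)).1 h
  exact ⟨⟨this.2.2.1, this.2.2.2.1⟩, h⟩

lemma mem_cells_iff_lam (u : ℕ × ℕ) :
    u ∈ cellsM n M ↔ 1 ≤ u.2 ∧ u.2 ≤ lam n M u.1 := by
  constructor
  · intro h
    have h' := (mem_cells_iff n M u).1 h
    exact ⟨h'.2.2.1, le_lam n M (by rwa [show (u.1, u.2) = u from rfl])⟩
  · rintro ⟨h1, h2⟩
    have hne : ((Finset.Icc 1 n).filter fun y => (u.1, y) ∈ cellsM n M).Nonempty := by
      rw [← card_pos]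
      by_contra h
      have : lam n M u.1 = 0 := by
        have : ((Finset.Icc 1 n).filter fun y => (u.1, y) ∈ cellsM n M) = ∅ := by
          rw [← card_eq_zero]; omega
        rw [lam, this]; rfl
      omega
    obtain ⟨y0, hy0, hy0e⟩ := exists_mem_eq_sup _ hne id
    rw [mem_filter] at hy0
    have : (u.1, u.2) ∈ cellsM n M := by
      apply cells_downclosed n M hy0.2 _ le_rfl h1
      · rw [lam, hy0e] at h2; exact h2
      · exact ((mem_cells_iff n M _).1 hy0.2).1
    rwa [show (u.1, u.2) = u from rfl] at this

lemma lam_pos_facts {x : ℕ} (hM : IsMatching n M) (h : 1 ≤ lam n M x) :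
    1 ≤ x ∧ x + lam n M x ≤ n := by
  have hc : (x, lam n M x) ∈ cellsM n M := by
    rw [mem_cells_iff_lam]; exact ⟨h, le_rfl⟩
  have h1 := (mem_cells_iff n M _).1 hc
  exact ⟨h1.1, cells_sum_le n M hM hc⟩

lemma lam_anti {x x' : ℕ} (h1 : 1 ≤ x) (h : x ≤ x') : lam n M x' ≤ lam n M x := by
  rcases Nat.eq_zero_or_pos (lam n M x') with h0 | h0
  · omega
  · have hc : (x', lam n M x') ∈ cellsM n M := by
      rw [mem_cells_iff_lam]; exact ⟨h0, le_rfl⟩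
    exact le_lam n M (cells_downclosed n M hc h1 h h0 le_rfl)

lemma cells_diag {u : ℕ × ℕ} {s t : ℕ} (hu1 : 1 ≤ u.1) (hu2 : 1 ≤ u.2)
    (hst : s ≤ t) (h : (u.1 + t, u.2 + t) ∈ cellsM n M) :
    (u.1 + s, u.2 + s) ∈ cellsM n M :=
  cells_downclosed n M h (by omega) (by omega) (by omega) (by omega)

lemma cells_bounds {x y : ℕ} (h : (x, y) ∈ cellsM n M) :
    1 ≤ x ∧ x ≤ n ∧ 1 ≤ y ∧ y ≤ n := by
  have := (mem_cells_iff n M (x, y)).1 h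
  exact ⟨this.1, this.2.1, this.2.2.1, this.2.2.2.1⟩

lemma mem_rim_iff (u : ℕ × ℕ) (L : ℕ) :
    u ∈ rimM n M (L + 1) ↔ 1 ≤ u.1 ∧ 1 ≤ u.2 ∧
      (u.1 + L, u.2 + L) ∈ cellsM n M ∧ (u.1 + L + 1, u.2 + L + 1) ∉ cellsM n M := by
  constructor
  · intro h
    rw [rimM, mem_filter] at h
    obtain ⟨hc, hd⟩ := h
    rw [depthM] at hd
    have hb := (mem_cells_iff n M u).1 hc
    refine ⟨hb.1, hb.2.2.1, ?_, ?_⟩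
    · by_contra hPL
      have hsub : (Finset.range (n + 1)).filter
          (fun t => (u.1 + t, u.2 + t) ∈ cellsM n M) ⊆ Finset.range L := by
        intro t ht
        rw [mem_filter] at ht
        rw [mem_range]
        by_contra hlt
        exact hPL (cells_diag n M (s := L) hb.1 hb.2.2.1 (by omega) ht.2)
      have := card_le_card hsub
      rw [card_range] at this
      omega
    · intro hPL1
      have hb2 := cells_bounds n M hPL1
      have hsub : Finset.range (L + 2) ⊆ (Finset.range (n + 1)).filter
          (fun t => (u.1 + t, u.2 + t) ∈ cellsM n M) := by
        intro t ht
        rw [mem_range] at ht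
        rw [mem_filter, mem_range]
        constructor
        · omega
        · exact cells_diag n M (s := t) (t := L + 1) hb.1 hb.2.2.1 (by omega) hPL1
      have := card_le_card hsub
      rw [card_range] at this
      omega
  · rintro ⟨h1, h2, hPL, hPL1⟩
    have hbL := cells_bounds n M hPL
    have hc : u ∈ cellsM n M := by
      have := cells_diag n M (u := u) h1 h2 (Nat.zero_le L) hPL
      simpa using this
    rw [rimM, mem_filter]
    refine ⟨hc, ?_⟩
    have heq : (Finset.range (n + 1)).filter
        (fun t => (u.1 + t, u.2 + t) ∈ cellsM n M) = Finset.range (L + 1) := by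
      ext t
      rw [mem_filter, mem_range, mem_range]
      constructor
      · rintro ⟨ht, hmem⟩
        by_contra hlt
        exact hPL1 (cells_diag n M (s := L + 1) h1 h2 (by omega) hmem)
      · intro ht
        exact ⟨by omega, cells_diag n M (s := t) (t := L) h1 h2 (by omega) hPL⟩
    rw [depthM, heq, card_range]


lemma mem_rim_iff_lam (u : ℕ × ℕ) (L : ℕ) :
    u ∈ rimM n M (L + 1) ↔ 1 ≤ u.1 ∧ 1 ≤ u.2 ∧
      u.2 + L ≤ lam n M (u.1 + L) ∧ lam n M (u.1 + L + 1) ≤ u.2 + L := by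
  rw [mem_rim_iff]
  rw [mem_cells_iff_lam n M (u.1 + L, u.2 + L), mem_cells_iff_lam n M (u.1 + L + 1, u.2 + L + 1)]
  simp only
  constructor
  · rintro ⟨h1, h2, ⟨h3, h4⟩, h5⟩
    exact ⟨h1, h2, h4, by omega⟩
  · rintro ⟨h1, h2, h3, h4⟩
    exact ⟨h1, h2, ⟨by omega, h3⟩, by omega⟩

lemma tele (a : ℕ → ℕ) (anti : ∀ x y, 1 ≤ x → x ≤ y → a y ≤ a x) (r : ℕ)
    (h1 : ∀ x, 1 ≤ x → x ≤ r → 1 ≤ a x) (h2 : a (r + 1) = 0) :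
    ∀ N, r ≤ N → ∑ x ∈ Icc 1 N, (a x + 1 - max 1 (a (x + 1))) = a 1 + r - 1 := by
  have T1 : ∀ N, N < r → (∑ x ∈ Icc 1 N, (a x + 1 - max 1 (a (x + 1)))) + a (N + 1) = a 1 + N := by
    intro N
    induction N with
    | zero => intro _; simp
    | succ N ih =>
      intro h
      rw [Finset.sum_Icc_succ_top (by omega)]
      have e1 := ih (by omega)
      have e2 := h1 (N + 2) (by omega) (by omega)
      have e3 := anti (N + 1) (N + 2) (by omega) (by omega)
      rw [max_eq_right e2, show N + 1 + 1 = N + 2 from rfl]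
      omega
  intro N hN
  induction N, hN using Nat.le_induction with
  | base =>
    match r with
    | 0 =>
      have : a 1 = 0 := h2
      simp [this]
    | Nat.succ s =>
      rw [Finset.sum_Icc_succ_top (by omega)]
      have t1 := T1 s (by omega)
      have e2 : a (s + 2) = 0 := h2
      have e3 := h1 (s + 1) (by omega) (by omega)
      rw [e2]
      simp only [Nat.max_zero, max_eq_left (Nat.zero_le 1)]
      omega
  | succ N hrN ih =>
    rw [Finset.sum_Icc_succ_top (by omega)]
    have e1 : a (N + 1) = 0 := by
      have := anti (r + 1) (N + 1) (by omega) (by omega)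
      omega
    have e2 : a (N + 2) = 0 := by
      have := anti (r + 1) (N + 2) (by omega) (by omega)
      omega
    rw [e1, e2, ih]
    simp

lemma rim_key (hM : IsMatching n M) (ℓ : ℕ) (hl1 : 1 ≤ ℓ) (hln : ℓ ≤ n) :
    ((Icc 1 (n - 1)).filter fun p => kLab n M ℓ ≤ p ∧ p ≤ iLab n M ℓ).card +
      ((Icc 1 (n - 1)).filter fun p => kLab n M ℓ + 1 ≤ p ∧ p ≤ jLab n M ℓ).card
      ≤ (rimM n M ℓ).card ∧
    2 ∣ ((rimM n M ℓ).card -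
      (((Icc 1 (n - 1)).filter fun p => kLab n M ℓ ≤ p ∧ p ≤ iLab n M ℓ).card +
       ((Icc 1 (n - 1)).filter fun p => kLab n M ℓ + 1 ≤ p ∧ p ≤ jLab n M ℓ).card)) := by
  obtain ⟨L, rfl⟩ : ∃ L, ℓ = L + 1 := ⟨ℓ - 1, by omega⟩
  by_cases hne : (rimM n M (L + 1)).Nonempty
  case neg =>
    rw [not_nonempty_iff_eq_empty] at hne
    have hk : kLab n M (L + 1) = n + 1 := by
      simp [kLab, hne]
    have hf1 : ((Icc 1 (n - 1)).filter fun p => kLab n M (L+1) ≤ p ∧ p ≤ iLab n M (L+1)) = ∅ := by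
      rw [eq_empty_iff_forall_notMem]
      intro p hp
      rw [mem_filter, mem_Icc, hk] at hp
      omega
    have hf2 : ((Icc 1 (n - 1)).filter fun p => kLab n M (L+1) + 1 ≤ p ∧ p ≤ jLab n M (L+1)) = ∅ := by
      rw [eq_empty_iff_forall_notMem]
      intro p hp
      rw [mem_filter, mem_Icc, hk] at hp
      omega
    rw [hf1, hf2, hne]
    simp
  case pos =>
    set R := rimM n M (L + 1) with hR
    set a : ℕ → ℕ := fun x => lam n M (x + L) - L with ha
    have hmemR : ∀ x y : ℕ, (x, y) ∈ R ↔ 1 ≤ x ∧ 1 ≤ y ∧ a (x + 1) ≤ y ∧ y ≤ a x := by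
      intro x y
      rw [hR, mem_rim_iff_lam]
      dsimp only
      simp only [ha]
      rw [show x + 1 + L = x + L + 1 from by omega]
      omega
    have hmemy : ∀ u ∈ R, 1 ≤ u.1 ∧ 1 ≤ u.2 ∧ a (u.1 + 1) ≤ u.2 ∧ u.2 ≤ a u.1 := by
      intro u hu
      exact (hmemR u.1 u.2).1 (by rwa [Prod.mk.eta])
    have anti : ∀ x y, 1 ≤ x → x ≤ y → a y ≤ a x := by
      intro x y hx hxy
      have := lam_anti n M (x := x + L) (x' := y + L) (by omega) (by omega)
      simp only [ha]
      omega
    set r : ℕ := R.sup Prod.fst with hr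
    obtain ⟨u0, hu0, hu0e⟩ := exists_mem_eq_sup R hne Prod.fst
    have hu0r : u0.1 = r := hu0e.symm
    have hy0 := hmemy u0 hu0
    have hr1 : 1 ≤ r := by omega
    have har : 1 ≤ a r := by rw [← hu0r]; omega
    have ha1 : 1 ≤ a 1 := le_trans har (anti 1 r le_rfl hr1)
    have hfstle : ∀ u ∈ R, u.1 ≤ r := fun u hu => le_sup (f := Prod.fst) hu
    have harn : a (r + 1) = 0 := by
      by_contra h
      have hb : (r + 1, a (r + 1)) ∈ R := by
        rw [hmemR, show r + 1 + 1 = r + 2 from rfl]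
        have := anti (r + 1) (r + 2) (by omega) (by omega)
        omega
      have := hfstle _ hb
      dsimp only at this
      omega
    have hposa : ∀ x, 1 ≤ x → x ≤ r → 1 ≤ a x := fun x hx hxr =>
      le_trans har (anti x r hx hxr)
    have hbr : (r, 1) ∈ R := by
      rw [hmemR]
      omega
    have hbt : (1, a 1) ∈ R := by
      rw [hmemR, show (1 : ℕ) + 1 = 2 from rfl]
      have := anti 1 2 le_rfl (by omega)
      omega
    have hrim_cells : ∀ u ∈ R, u ∈ cellsM n M := by
      intro u hu
      rw [hR, rimM, mem_filter] at hu
      exact hu.1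
    have hsum_le : ∀ u ∈ R, u.1 + u.2 ≤ n := by
      intro u hu
      exact cells_sum_le n M hM (x := u.1) (y := u.2) (by rw [Prod.mk.eta]; exact hrim_cells u hu)
    have hrn : r ≤ n := by
      have := hsum_le _ hbr
      simp at this
      omega
    have ha1n : a 1 + 1 ≤ n := by
      have := hsum_le _ hbt
      simp at this
      omega
    set m : ℕ := R.sup (fun u => u.1 + u.2) with hm
    have hmn : m ≤ n := Finset.sup_le hsum_le
    have hm1 : r + 1 ≤ m := by
      have := le_sup (f := fun u : ℕ × ℕ => u.1 + u.2) hbr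
      simp only at this
      omega
    have hm2 : a 1 + 1 ≤ m := by
      have := le_sup (f := fun u : ℕ × ℕ => u.1 + u.2) hbt
      simp only at this
      omega
    have hm3 : m ≤ r + a 1 := by
      apply Finset.sup_le
      intro u hu
      have h1 := hmemy u hu
      have h2 := hfstle u hu
      have h3 : a u.1 ≤ a 1 := anti 1 u.1 le_rfl h1.1
      omega
    have hsnd : R.sup Prod.snd = a 1 := by
      apply le_antisymm
      · apply Finset.sup_le
        intro u hu
        have h1 := hmemy u hu
        have h3 : a u.1 ≤ a 1 := anti 1 u.1 le_rfl h1.1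
        exact le_trans h1.2.2.2 h3
      · exact le_sup (f := Prod.snd) hbt
    have hi : iLab n M (L + 1) = n - r := by
      rw [iLab, ← hR, ← hr]
      apply le_antisymm
      · apply Finset.sup_le
        intro u hu
        rw [mem_filter] at hu
        have h1 := hmemy u hu.1
        have h2 : u.1 = r := hu.2
        omega
      · have hmem : (r, 1) ∈ R.filter fun u => u.1 = r := by
          rw [mem_filter]
          exact ⟨hbr, rfl⟩
        have := le_sup (f := fun u : ℕ × ℕ => n + 1 - u.1 - u.2) hmem
        simp only at this
        omega
    have hj : jLab n M (L + 1) = n - a 1 := by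
      rw [jLab, ← hR, hsnd]
      apply le_antisymm
      · apply Finset.sup_le
        intro u hu
        rw [mem_filter] at hu
        have h1 := hmemy u hu.1
        have h2 : u.2 = a 1 := hu.2
        omega
      · have hmem : (1, a 1) ∈ R.filter fun u => u.2 = a 1 := by
          rw [mem_filter]
          exact ⟨hbt, rfl⟩
        have := le_sup (f := fun u : ℕ × ℕ => n + 1 - u.1 - u.2) hmem
        simp only at this
        omega
    have hk : kLab n M (L + 1) = n + 1 - m := by
      rw [kLab, ← hR, ← hm]
    have hfib : R.card = ∑ x ∈ Icc 1 n, (R.filter fun u => u.1 = x).card := by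
      apply card_eq_sum_card_fiberwise
      intro u hu
      rw [mem_coe, mem_Icc]
      have h1 := hmemy u hu
      have h2 := hsum_le u hu
      omega
    have hrow : ∀ x, 1 ≤ x → (R.filter fun u => u.1 = x)
        = (Icc (max 1 (a (x + 1))) (a x)).image fun y => (x, y) := by
      intro x hx
      ext u
      rcases u with ⟨ux, uy⟩
      rw [mem_filter, mem_image]
      constructor
      · rintro ⟨hu, hux⟩
        dsimp only at hux
        subst hux
        rw [hmemR] at hu
        exact ⟨uy, by rw [mem_Icc]; omega, rfl⟩
      · rintro ⟨y, hy, hye⟩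
        rw [mem_Icc] at hy
        obtain ⟨rfl, rfl⟩ : x = ux ∧ y = uy := by
          rw [Prod.mk.injEq] at hye; exact hye
        rw [hmemR]
        omega
    have hrowcard : ∀ x ∈ Icc 1 n, (R.filter fun u => u.1 = x).card
        = a x + 1 - max 1 (a (x + 1)) := by
      intro x hx
      rw [mem_Icc] at hx
      rw [hrow x hx.1, card_image_of_injective _ (fun y y' h => by
        simpa using h), Nat.card_Icc]
    have hcardR : R.card = a 1 + r - 1 := by
      rw [hfib, Finset.sum_congr rfl hrowcard]
      exact tele a anti r hposa harn n hrn
    have hc1 : ((Icc 1 (n - 1)).filter fun p => kLab n M (L+1) ≤ p ∧ p ≤ iLab n M (L+1)).card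
        = m - r := by
      have heq : ((Icc 1 (n - 1)).filter fun p => kLab n M (L+1) ≤ p ∧ p ≤ iLab n M (L+1))
          = Icc (n + 1 - m) (n - r) := by
        ext p
        rw [mem_filter, mem_Icc, mem_Icc, hk, hi]
        omega
      rw [heq, Nat.card_Icc]
      omega
    have hc2 : ((Icc 1 (n - 1)).filter fun p => kLab n M (L+1) + 1 ≤ p ∧ p ≤ jLab n M (L+1)).card
        = m - a 1 - 1 := by
      have heq : ((Icc 1 (n - 1)).filter fun p => kLab n M (L+1) + 1 ≤ p ∧ p ≤ jLab n M (L+1))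
          = Icc (n + 2 - m) (n - a 1) := by
        ext p
        rw [mem_filter, mem_Icc, mem_Icc, hk, hj]
        omega
      rw [heq, Nat.card_Icc]
      omega
    rw [hc1, hc2, hcardR]
    omega

lemma depth_mem (u : ℕ × ℕ) (hu : u ∈ cellsM n M) : depthM n M u ∈ Icc 1 n := by
  have hb := (mem_cells_iff n M u).1 hu
  rw [mem_Icc]
  constructor
  · rw [depthM]
    apply card_pos.2
    refine ⟨0, mem_filter.2 ⟨mem_range.2 (by omega), by simpa using hu⟩⟩
  · rw [depthM]
    calc ((Finset.range (n + 1)).filter fun t => (u.1 + t, u.2 + t) ∈ cellsM n M).card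
        ≤ (Finset.range n).card := by
          apply card_le_card
          intro t ht
          rw [mem_filter] at ht
          rw [mem_range]
          have hb2 := cells_bounds n M ht.2
          omega
      _ = n := card_range n

end RuleB

/-- The total Rule-B multiplicity is at most `d(π)` (the number of boxes of `Y(π)`),
and the difference is even. -/
theorem sum_multiplicities_le_card_and_even (n : ℕ) (M : Finset (ℕ × ℕ))
    (hM : IsMatching n M) :
    (∑ p ∈ Finset.Icc 1 (n - 1), mB n M p) ≤ (cellsM n M).card ∧
    Even ((cellsM n M).card - ∑ p ∈ Finset.Icc 1 (n - 1), mB n M p) := by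
  classical
  have hsum : ∑ p ∈ Finset.Icc 1 (n - 1), mB n M p
      = ∑ ℓ ∈ Finset.Icc 1 n,
          (((Finset.Icc 1 (n - 1)).filter fun p => kLab n M ℓ ≤ p ∧ p ≤ iLab n M ℓ).card +
           ((Finset.Icc 1 (n - 1)).filter fun p => kLab n M ℓ + 1 ≤ p ∧ p ≤ jLab n M ℓ).card) := by
    simp only [mB]
    rw [Finset.sum_comm]
    refine Finset.sum_congr rfl fun ℓ _ => ?_
    rw [Finset.sum_add_distrib]
    congr 1
    · rw [Finset.sum_boole, Nat.cast_id]
    · rw [Finset.sum_boole, Nat.cast_id]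
  have hcards : (cellsM n M).card = ∑ ℓ ∈ Finset.Icc 1 n, (rimM n M ℓ).card := by
    simp only [rimM]
    exact Finset.card_eq_sum_card_fiberwise (RuleB.depth_mem n M)
  have key : ∀ ℓ ∈ Finset.Icc 1 n,
      (((Finset.Icc 1 (n - 1)).filter fun p => kLab n M ℓ ≤ p ∧ p ≤ iLab n M ℓ).card +
       ((Finset.Icc 1 (n - 1)).filter fun p => kLab n M ℓ + 1 ≤ p ∧ p ≤ jLab n M ℓ).card)
      ≤ (rimM n M ℓ).card ∧ _ := fun ℓ hℓ =>
    RuleB.rim_key n M hM ℓ (Finset.mem_Icc.1 hℓ).1 (Finset.mem_Icc.1 hℓ).2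
  constructor
  · rw [hsum, hcards]
    exact Finset.sum_le_sum fun ℓ hℓ => (key ℓ hℓ).1
  · rw [hsum, hcards, ← Finset.sum_tsub_distrib _ fun ℓ hℓ => (key ℓ hℓ).1]
    rw [even_iff_two_dvd]
    exact Finset.dvd_sum fun ℓ hℓ => (key ℓ hℓ).2
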